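/- Let H = {j₁ < ⋯ < j_s} be a finite set of positive integers, (m_j)_{j∈H} positive integers, p_j = L - 2Σ_{k∈H} min(j,k)m_k, and F the s×s matrix F_{j,k} = δ_{j,k}p_j + 2·min(j,k)m_k (j,k ∈ H). Then det F = L · p_{j₁} · p_{j₂} ⋯ p_{j_{s-1}}. -/

import Mathlib

open Finset Matrix

lemma aux8 : ∀ (n : ℕ) (L : ℤ) (j m : Fin (n+1) → ℤ), Monotone j →
    (Matrix.of fun a b : Fin (n+1) =>
      (if a = b then L - 2 * ∑ c, min (j a) (j c) * m c else 0)
        + 2 * min (j a) (j b) * m b).det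
    = L * ∏ a : Fin n, (L - 2 * ∑ c, min (j a.castSucc) (j c) * m c) := by
  intro n
  induction n with
  | zero =>
      intro L j m hj
      simp [Matrix.det_fin_one]
      ring
  | succ n ih =>
      intro L j m hj
      set q : Fin (n+2) → ℤ := fun a => L - 2 * ∑ c, min (j a) (j c) * m c with hq
      set F : Matrix (Fin (n+2)) (Fin (n+2)) ℤ :=
        Matrix.of fun a b => (if a = b then q a else 0) + 2 * min (j a) (j b) * m b with hFdef
      have hrow : ∀ a, ∑ b, F a b = L := by
        intro a
        simp only [hFdef, Matrix.of_apply, Finset.sum_add_distrib, Finset.sum_ite_eq,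
          Finset.mem_univ, if_true, hq]
        rw [Finset.mul_sum]
        ring_nf
      set U : Matrix (Fin (n+2)) (Fin (n+2)) ℤ :=
        Matrix.of fun b c => if c = 0 then 1 else if b = c then 1 else 0 with hUdef
      set V : Matrix (Fin (n+2)) (Fin (n+2)) ℤ :=
        Matrix.of fun a b => if a = b then 1 else if b = 0 then -1 else 0 with hVdef
      have hUdet : U.det = 1 := by
        rw [Matrix.det_of_lowerTriangular]
        · simp [hUdef]
        · intro a b hab
          have hab' : a < b := hab
          have hb : b ≠ 0 := by rintro rfl; exact absurd hab' (Fin.not_lt_zero a)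
          simp [hUdef, hb, hab'.ne]
      have hVdet : V.det = 1 := by
        rw [Matrix.det_of_lowerTriangular]
        · simp [hVdef]
        · intro a b hab
          have hab' : a < b := hab
          have hb : b ≠ 0 := by rintro rfl; exact absurd hab' (Fin.not_lt_zero a)
          simp [hVdef, hb, hab'.ne]
      have hFU : ∀ a c, (F * U) a c = if c = 0 then L else F a c := by
        intro a c
        rw [Matrix.mul_apply]
        by_cases hc : c = 0
        · simp [hc, hUdef, hrow a]
        · simp only [hUdef, Matrix.of_apply, if_neg hc]
          simp [hc, mul_ite]
      have hG : ∀ a c, (V * (F * U)) a c =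
          (if c = 0 then (L:ℤ) else F a c) - (if a = 0 then 0 else if c = 0 then (L:ℤ) else F 0 c) := by
        intro a c
        rw [Matrix.mul_apply]
        have hV' : ∀ x, V a x = (if a = x then 1 else 0) + (if x = 0 then (if a = 0 then 0 else -1) else 0) := by
          intro x
          simp only [hVdef, Matrix.of_apply]
          by_cases h1 : a = x <;> by_cases h2 : x = 0 <;> simp [h1, h2] <;> subst h2 <;> simp [h1] <;> tauto
        calc ∑ x, V a x * (F * U) x c
            = ∑ x, ((if a = x then 1 else 0) * (F * U) x c
              + (if x = 0 then (if a = 0 then 0 else -1) else 0) * (F * U) x c) := by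
              refine Finset.sum_congr rfl fun x _ => ?_
              rw [hV']; ring
          _ = _ := by
              rw [Finset.sum_add_distrib]
              simp only [ite_mul, one_mul, zero_mul, Finset.sum_ite_eq, Finset.sum_ite_eq',
                Finset.mem_univ, if_true]
              rw [hFU a c, hFU 0 c]
              by_cases ha : a = 0 <;> by_cases hc : c = 0 <;> simp [ha, hc] <;> ring
      have hdet : F.det = (V * (F * U)).det := by
        rw [Matrix.det_mul, Matrix.det_mul, hVdet, hUdet]; ring
      set L' : ℤ := L - 2 * j 0 * ∑ c, m c with hL'
      have hqsucc : ∀ a : Fin (n+1), q a.succ =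
          L' - 2 * ∑ c : Fin (n+1), min (j a.succ - j 0) (j c.succ - j 0) * m c.succ := by
        intro a
        have hmin : ∀ c : Fin (n+1), min (j a.succ - j 0) (j c.succ - j 0) = min (j a.succ) (j c.succ) - j 0 := by
          intro c; exact min_sub_sub_right _ _ _
        simp only [hmin, hq, hL']
        rw [Fin.sum_univ_succ (f := fun c => min (j a.succ) (j c) * m c),
          Fin.sum_univ_succ (f := fun c => m c)]
        have h0 : min (j a.succ) (j 0) = j 0 := min_eq_right (hj (Fin.zero_le _))
        rw [h0]
        have hsplit : ∑ x : Fin (n+1), (min (j a.succ) (j x.succ) - j 0) * m x.succ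
            = (∑ x : Fin (n+1), min (j a.succ) (j x.succ) * m x.succ)
              - j 0 * ∑ x : Fin (n+1), m x.succ := by
          rw [Finset.mul_sum, ← Finset.sum_sub_distrib]
          exact Finset.sum_congr rfl fun x _ => by ring
        rw [hsplit]
        ring
      have hq0 : q 0 = L' := by
        simp only [hq, hL']
        have hmin : ∀ c : Fin (n+2), min (j 0) (j c) = j 0 := fun c => min_eq_left (hj (Fin.zero_le _))
        simp only [hmin]
        rw [Finset.mul_sum]
        congr 1
        rw [Finset.mul_sum]
        exact Finset.sum_congr rfl fun c _ => by ring
      have hsub : (V * (F * U)).submatrix Fin.succ Fin.succ =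
          Matrix.of fun a b : Fin (n+1) =>
            (if a = b then L' - 2 * ∑ c : Fin (n+1), min (j a.succ - j 0) (j c.succ - j 0) * m c.succ else 0)
              + 2 * min (j a.succ - j 0) (j b.succ - j 0) * m b.succ := by
        ext a b
        simp only [Matrix.submatrix_apply, Matrix.of_apply]
        rw [hG]
        have hbs : (b.succ : Fin (n+2)) ≠ 0 := Fin.succ_ne_zero b
        have has : (a.succ : Fin (n+2)) ≠ 0 := Fin.succ_ne_zero a
        rw [if_neg hbs, if_neg has, if_neg hbs]
        simp only [hFdef, Matrix.of_apply]
        have h0 : min (j 0) (j b.succ) = j 0 := min_eq_left (hj (Fin.zero_le _))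
        have hne : (0 : Fin (n+2)) ≠ b.succ := (Fin.succ_ne_zero b).symm
        rw [if_neg hne, h0]
        have hmin : min (j a.succ - j 0) (j b.succ - j 0) = min (j a.succ) (j b.succ) - j 0 :=
          min_sub_sub_right _ _ _
        have hiff : (a.succ = b.succ) = (a = b) := by
          simp [Fin.succ_inj]
        by_cases hab : a = b
        · subst hab
          rw [if_pos rfl, if_pos rfl, ← hqsucc, hmin]
          ring
        · rw [if_neg (fun h => hab (Fin.succ_inj.mp h)), if_neg hab, hmin]; ring
      have hM : ((V * (F * U)).submatrix Fin.succ Fin.succ).det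
          = q 0 * ∏ a : Fin n, q a.castSucc.succ := by
        rw [hsub, ih L' (fun a => j a.succ - j 0) (fun a => m a.succ)
          (fun a b hab => by exact sub_le_sub_right (hj (Fin.succ_le_succ_iff.mpr hab)) _), hq0]
        congr 1
        exact Finset.prod_congr rfl fun a _ => (hqsucc a.castSucc).symm
      have hR : ∏ a : Fin (n+1), (L - 2 * ∑ c, min (j a.castSucc) (j c) * m c)
          = q 0 * ∏ a : Fin n, q a.castSucc.succ := by
        calc ∏ a : Fin (n+1), (L - 2 * ∑ c, min (j a.castSucc) (j c) * m c)
            = ∏ a : Fin (n+1), q a.castSucc := rfl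
          _ = q (0 : Fin (n+1)).castSucc * ∏ a : Fin n, q a.succ.castSucc :=
              Fin.prod_univ_succ _
          _ = q 0 * ∏ a : Fin n, q a.castSucc.succ := by
              rw [Fin.castSucc_zero]
              refine congrArg _ (Finset.prod_congr rfl fun a _ => ?_)
              rw [Fin.succ_castSucc]
      rw [hdet, Matrix.det_succ_column_zero]
      have hzero : ∀ i : Fin (n+2), i ≠ 0 → (-1 : ℤ) ^ (i : ℕ) * (V * (F * U)) i 0
          * ((V * (F * U)).submatrix i.succAbove Fin.succ).det = 0 := by
        intro i hi
        rw [hG]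
        simp [hi]
      rw [Finset.sum_eq_single 0 (fun i _ hi => hzero i hi) (by simp)]
      have h00 : (V * (F * U)) 0 0 = L := by rw [hG]; simp
      rw [h00, Fin.succAbove_zero, hM, hR]
      norm_num



/-- `det F = L · p_{j₁} ⋯ p_{j_{s-1}}` for the matrix
`F_{j,k} = δ_{j,k} p_j + 2 min(j,k) m_k` with
`p_j = L - 2 Σ_k min(j,k) m_k` (here `s = n+1`). -/
theorem stmt8 (L : ℕ) (hL : 0 < L) (n : ℕ)
    (j : Fin (n + 1) → ℕ) (hj : StrictMono j) (hjpos : ∀ a, 0 < j a)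
    (m : Fin (n + 1) → ℕ) (hm : ∀ a, 0 < m a)
    (p : ℕ → ℤ)
    (hp : ∀ x, p x = (L : ℤ) - 2 * ∑ b, (min x (j b) : ℤ) * (m b : ℤ))
    (F : Matrix (Fin (n + 1)) (Fin (n + 1)) ℤ)
    (hF : ∀ a b, F a b =
      (if a = b then p (j a) else 0) + 2 * (min (j a) (j b) : ℤ) * (m b : ℤ)) :
    F.det = (L : ℤ) * ∏ a : Fin n, p (j a.castSucc) := by
  have hcast : ∀ x y : ℕ, ((min x y : ℕ) : ℤ) = min (x:ℤ) (y:ℤ) := fun x y => Nat.cast_min x y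
  have hFeq : F = Matrix.of fun a b : Fin (n+1) =>
      (if a = b then (L:ℤ) - 2 * ∑ c, min ((j a : ℤ)) ((j c : ℤ)) * (m c : ℤ) else 0)
        + 2 * min ((j a : ℤ)) ((j b : ℤ)) * (m b : ℤ) := by
    ext a b
    rw [hF, hp]
    simp only [Matrix.of_apply, hcast]
  rw [hFeq, aux8 n (L:ℤ) (fun a => (j a : ℤ)) (fun a => (m a : ℤ))
    (fun a b hab => by simp only []; exact_mod_cast hj.monotone hab)]
  congr 1
  refine Finset.prod_congr rfl fun a _ => ?_
  rw [hp]
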